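/- For |t| < min(1, a^{-1}), the generating function of the polynomials F_n satisfies ∑_{n=0}^∞ q^{n(n-1)/2} F_n(a,q;x) (-t)^n = ∑_{k=0}^∞ q^{k(k-1)/2} (-x t)^k / ((t;q)_{k+1} (a t;q)_{k+1}). -/

import Mathlib

open Finset Filter

lemma e_succ (K : ℕ) : (K+1) * K / 2 = K * (K-1) / 2 + K := by
  cases K with
  | zero => rfl
  | succ m =>
    have h : (m+1+1)*(m+1) = (m+1)*m + 2*(m+1) := by ring
    simp only [Nat.succ_sub_one]
    omega

lemma gronwall (C q : ℝ) (hC : 0 ≤ C) (hq0 : 0 ≤ q) (hq1 : q < 1) (M : ℕ → ℝ)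
    (h0 : 0 ≤ M 0) (hM : ∀ n, M (n+1) ≤ (1 + C * q^n) * M n) (n : ℕ) :
    M n ≤ M 0 * Real.exp (C / (1-q)) := by
  have hprod : ∀ n, M n ≤ M 0 * ∏ j ∈ range n, (1 + C * q^j) := by
    intro n
    induction n with
    | zero => simp
    | succ m ih =>
      calc M (m+1) ≤ (1 + C * q^m) * M m := hM m
        _ ≤ (1 + C * q^m) * (M 0 * ∏ j ∈ range m, (1 + C * q^j)) := by
            apply mul_le_mul_of_nonneg_left ih
            positivity
        _ = M 0 * ∏ j ∈ range (m+1), (1 + C * q^j) := by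
            rw [prod_range_succ]; ring
  refine (hprod n).trans ?_
  apply mul_le_mul_of_nonneg_left _ h0
  calc ∏ j ∈ range n, (1 + C * q^j) ≤ ∏ j ∈ range n, Real.exp (C * q^j) := by
        apply Finset.prod_le_prod
        · intro i _; positivity
        · intro i _; linarith [Real.add_one_le_exp (C * q ^ i)]
    _ = Real.exp (∑ j ∈ range n, C * q^j) := by rw [Real.exp_sum]
    _ ≤ Real.exp (C / (1-q)) := by
        apply Real.exp_le_exp.mpr
        rw [← mul_sum, div_eq_mul_inv]
        apply mul_le_mul_of_nonneg_left _ hC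
        rw [← tsum_geometric_of_lt_one hq0 hq1]
        exact Summable.sum_le_tsum _ (fun i _ => by positivity)
          (summable_geometric_of_lt_one hq0 hq1)

lemma lemA (f : ℕ → ℂ) (K c : ℝ) (hK : 0 ≤ K) (hc0 : 0 ≤ c) (hc : c < 1)
    (hf : ∀ n, ‖f n‖ ≤ K * c^n) :
    Summable f ∧ ‖∑' n, f n‖ ≤ K / (1 - c) := by
  have hs : Summable (fun n : ℕ => K * c^n) :=
    (summable_geometric_of_lt_one hc0 hc).mul_left K
  have hsf : Summable (fun n => ‖f n‖) :=
    Summable.of_nonneg_of_le (fun n => norm_nonneg _) hf hs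
  refine ⟨Summable.of_norm hsf, ?_⟩
  refine (norm_tsum_le_tsum_norm hsf).trans ?_
  refine (Summable.tsum_le_tsum hf hsf hs).trans_eq ?_
  rw [tsum_mul_left, tsum_geometric_of_lt_one hc0 hc, div_eq_mul_inv]

lemma aux_tendsto (w q : ℝ) (hw : 0 ≤ w) (hq0 : 0 ≤ q) (hq1 : q < 1) :
    Tendsto (fun K : ℕ => w ^ K * q ^ (K * (K-1) / 2)) atTop (nhds 0) := by
  apply Summable.tendsto_atTop_zero
  apply summable_of_ratio_norm_eventually_le (r := 1/2) (by norm_num)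
  have h2 : Tendsto (fun K : ℕ => w * q ^ K) atTop (nhds 0) := by
    have := (tendsto_pow_atTop_nhds_zero_of_lt_one hq0 hq1).const_mul w
    simpa using this
  filter_upwards [h2.eventually (eventually_le_nhds (by norm_num : (0:ℝ) < 1/2))] with K hK
  have he : w^(K+1) * q^((K+1)*((K+1)-1)/2) = (w*q^K) * (w^K * q^(K*(K-1)/2)) := by
    rw [Nat.succ_sub_one, e_succ K, pow_add, pow_succ]; ring
  rw [he, Real.norm_of_nonneg (by positivity), Real.norm_of_nonneg (by positivity)]
  apply mul_le_mul_of_nonneg_right hK (by positivity)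

/-- Finite q-Pochhammer symbol `(z;q)_k = ∏_{j<k} (1 - z qʲ)`. -/
noncomputable def qPoch (z q : ℂ) (k : ℕ) : ℂ := ∏ j ∈ range k, (1 - z * q ^ j)

set_option maxHeartbeats 2000000 in
/-- Generating function for the q-Lommel polynomials:
`∑ₙ q^{n(n-1)/2} Fₙ(a,q;x) (-t)ⁿ = ∑ₖ q^{k(k-1)/2}(-xt)ᵏ/((t;q)_{k+1}(at;q)_{k+1})`
for `|t| < min(1, a⁻¹)`. -/
theorem stmt5 (a q : ℝ) (ha : 0 < a) (hq0 : 0 < q) (hq1 : q < 1) (x : ℂ)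
    (F : ℕ → ℂ)
    (hF0 : F 0 = 1) (hF1 : F 1 = x - ((a : ℂ) + 1))
    (hFrec : ∀ n : ℕ, F (n + 2) =
      (x - ((a : ℂ) + 1) * (q : ℂ) ^ (-(n + 1 : ℤ))) * F (n + 1)
        - (a : ℂ) * (q : ℂ) ^ (-2 * (n + 1 : ℤ) + 1) * F n)
    (t : ℂ) (ht : ‖t‖ < min 1 a⁻¹) :
    Summable (fun n : ℕ => (q : ℂ) ^ (n * (n - 1) / 2 : ℕ) * F n * (-t) ^ n)
    ∧ Summable (fun k : ℕ =>
        (q : ℂ) ^ (k * (k - 1) / 2 : ℕ) * (-x * t) ^ k /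
          (qPoch t q (k + 1) * qPoch ((a : ℂ) * t) q (k + 1)))
    ∧ (∑' n : ℕ, (q : ℂ) ^ (n * (n - 1) / 2 : ℕ) * F n * (-t) ^ n)
      = ∑' k : ℕ, (q : ℂ) ^ (k * (k - 1) / 2 : ℕ) * (-x * t) ^ k /
          (qPoch t q (k + 1) * qPoch ((a : ℂ) * t) q (k + 1)) := by
  -- ## basic real parameters
  set τ : ℝ := ‖t‖ with hτdef
  have hτ0 : 0 ≤ τ := norm_nonneg t
  have hτ1 : τ < 1 := lt_of_lt_of_le ht (min_le_left _ _)
  have hτa : a * τ < 1 := by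
    have h := lt_of_lt_of_le ht (min_le_right _ _)
    have := mul_lt_mul_of_pos_left h ha
    rwa [mul_inv_cancel₀ ha.ne'] at this
  set ρ : ℝ := max 1 a with hρdef
  have hρ1 : 1 ≤ ρ := le_max_left _ _
  have hρa : a ≤ ρ := le_max_right _ _
  have hτρ : τ * ρ < 1 := by
    rcases le_total 1 a with h | h
    · rw [hρdef, max_eq_right h]; linarith [hτa]
    · rw [hρdef, max_eq_left h]; linarith
  set ρ' : ℝ := if t = 0 then ρ + 1 else (ρ + 1/τ)/2 with hρ'def
  have hρρ' : ρ < ρ' := by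
    rw [hρ'def]; split_ifs with h
    · linarith
    · have hτpos : 0 < τ := by
        simpa [hτdef, norm_pos_iff] using h
      have : ρ < 1/τ := by rw [lt_div_iff₀ hτpos]; linarith [hτρ]
      linarith
  have hτρ' : τ * ρ' < 1 := by
    rw [hρ'def]; split_ifs with h
    · simp [hτdef, h]
    · have hτpos : 0 < τ := by simpa [hτdef, norm_pos_iff] using h
      have h1 : τ * ((ρ + 1/τ)/2) = (τ * ρ + 1)/2 := by field_simp
      rw [h1]; linarith
  have hρ'1 : 1 < ρ' := lt_of_le_of_lt hρ1 hρρ'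
  have hρ'a : a < ρ' := lt_of_le_of_lt hρa hρρ'
  have hρ'0 : 0 < ρ' := by linarith
  have haτ1 : 0 < 1 - a * τ := by linarith
  have hτ1' : 0 < 1 - τ := by linarith
  have hqC0 : (q : ℂ) ≠ 0 := by
    simp only [ne_eq, Complex.ofReal_eq_zero]; exact hq0.ne'
  -- ## the sequence g and its recurrence
  set e : ℕ → ℕ := fun n => n * (n-1) / 2 with hedef
  set g : ℕ → ℂ := fun n => (q:ℂ)^(e n) * F n with hgdef
  have hg0 : g 0 = 1 := by simp [hgdef, hedef, hF0]
  have hg1 : g 1 = x - ((a:ℂ)+1) := by simp [hgdef, hedef, hF1]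
  have he1 : ∀ n : ℕ, e (n+1) = e n + n := fun n => e_succ n
  have hgrec : ∀ n : ℕ, g (n+2) = (x * (q:ℂ)^(n+1) - ((a:ℂ)+1)) * g (n+1) - (a:ℂ) * g n := by
    intro n
    have A1 : (q:ℂ)^(e (n+2)) = (q:ℂ)^(n+1) * (q:ℂ)^(e (n+1)) := by
      rw [he1 (n+1), pow_add]; ring
    have Az : (q:ℂ)^(n+1) * (q:ℂ)^(-(n+1:ℤ)) = 1 := by
      have hz : ((n+1 : ℕ) : ℤ) + (-(n+1:ℤ)) = 0 := by push_cast; ring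
      rw [← zpow_natCast (q:ℂ) (n+1), ← zpow_add₀ hqC0, hz, zpow_zero]
    have A2 : (q:ℂ)^(e (n+2)) * (q:ℂ)^(-(n+1:ℤ)) = (q:ℂ)^(e (n+1)) := by
      rw [A1, mul_assoc, mul_comm ((q:ℂ)^(e (n+1))), ← mul_assoc, Az, one_mul]
    have A3 : (q:ℂ)^(e (n+2)) * (q:ℂ)^(-2*(n+1:ℤ)+1) = (q:ℂ)^(e n) := by
      have h22 : e (n+2) = e n + (2*n+1) := by rw [he1 (n+1), he1 n]; ring
      rw [h22, pow_add, mul_assoc]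
      have hz : ((2*n+1 : ℕ) : ℤ) + (-2*(n+1:ℤ)+1) = 0 := by push_cast; ring
      have : (q:ℂ)^(2*n+1) * (q:ℂ)^(-2*(n+1:ℤ)+1) = 1 := by
        rw [← zpow_natCast (q:ℂ) (2*n+1), ← zpow_add₀ hqC0, hz, zpow_zero]
      rw [this, mul_one]
    simp only [hgdef]
    rw [hFrec n]
    linear_combination (x * F (n+1)) * A1 - (((a:ℂ)+1) * F (n+1)) * A2 - ((a:ℂ) * F n) * A3
  -- ## growth bound on g
  set sq : ℕ → ℂ := fun n => g (n+1) + g n with hsqdef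
  have hsrec : ∀ n : ℕ, sq (n+1) = -(a:ℂ) * sq n + x * (q:ℂ)^(n+1) * g (n+1) := by
    intro n
    simp only [hsqdef]
    rw [hgrec n]; push_cast; ring
  set β : ℝ := ρ'⁻¹ with hβdef
  have hβ0 : 0 < β := inv_pos.mpr hρ'0
  have hβ1 : β ≤ 1 := by
    rw [hβdef]
    rw [inv_le_one_iff₀]; right; linarith
  have hβρ : β * ρ' = 1 := inv_mul_cancel₀ (by linarith)
  set X : ℝ := ‖x‖ with hXdef
  have hX0 : 0 ≤ X := norm_nonneg x
  set c : ℝ := X * β with hcdef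
  have hc0 : 0 ≤ c := mul_nonneg hX0 hβ0.le
  set θ : ℝ := ρ' / (ρ' - a) with hθdef
  have hθ0 : 0 < θ := div_pos hρ'0 (by linarith)
  have hθβ : 1 + θ * a * β = θ := by
    have h1 : ρ' - a ≠ 0 := by linarith
    have h2 : ρ' ≠ 0 := by linarith
    rw [hθdef, hβdef]; field_simp; ring
  set C : ℝ := θ * c + c with hCdef
  have hC0 : 0 ≤ C := by positivity
  set M : ℕ → ℝ := fun n => ‖g n‖ * β^n + θ * (‖sq n‖ * β^(n+1))
    with hMdef
  have hM0 : 0 ≤ M 0 := by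
    simp only [hMdef]
    positivity
  have hMrec : ∀ n : ℕ, M (n+1) ≤ (1 + C * q^n) * M n := by
    intro n
    simp only [hMdef]
    have hq' : q^(n+1) ≤ q^n := by
      rw [pow_succ]
      nlinarith [pow_pos hq0 n]
    have hqn0 : (0:ℝ) ≤ q^n := by positivity
    have f1 : ‖g (n+1)‖ ≤ ‖g n‖ + ‖sq n‖ := by
      have h : g (n+1) = sq n - g n := by simp only [hsqdef]; ring
      rw [h]
      have h2 := norm_sub_le (sq n) (g n)
      linarith
    have f2 : ‖sq (n+1)‖ ≤
        a * ‖sq n‖ + X * q^(n+1) * ‖g (n+1)‖ := by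
      rw [hsrec n]
      have h2 := norm_add_le (-(a:ℂ) * sq n) (x * (q:ℂ)^(n+1) * g (n+1))
      simp only [norm_mul, norm_neg, norm_pow,
        Complex.norm_real, Real.norm_eq_abs] at h2
      rw [abs_of_pos ha, abs_of_pos hq0] at h2
      linarith [hX0]
    set Gn := ‖g n‖ with hGn
    set Sn := ‖sq n‖ with hSn
    have hGn0 : 0 ≤ Gn := norm_nonneg _
    have hSn0 : 0 ≤ Sn := norm_nonneg _
    have hcoefG : β + θ*X*q^(n+1)*β^2 ≤ 1 + C*q^n := by
      have hββ : β^2 ≤ β := by nlinarith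
      have h2 : q^(n+1)*β^2 ≤ q^n*β := mul_le_mul hq' hββ (by positivity) hqn0
      have h3 : θ*X*q^(n+1)*β^2 ≤ θ*c*q^n := by
        rw [hcdef]
        nlinarith [mul_le_mul_of_nonneg_left h2 (mul_nonneg hθ0.le hX0)]
      have h4 : θ*c*q^n ≤ C*q^n := by
        apply mul_le_mul_of_nonneg_right _ hqn0
        rw [hCdef]; linarith
      linarith
    have hcoefS : β + θ*a*β^2 + θ*X*q^(n+1)*β^2 ≤ θ*β*(1 + C*q^n) := by
      have h2 : θ*X*q^(n+1)*β^2 ≤ θ*(C*q^n)*β := by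
        have h5 : X*q^(n+1)*β ≤ C*q^n := by
          have : X*β*q^(n+1) ≤ X*β*q^n := by
            apply mul_le_mul_of_nonneg_left hq' (by positivity)
          have h6 : c ≤ C := by rw [hCdef]; nlinarith
          calc X*q^(n+1)*β = X*β*q^(n+1) := by ring
            _ ≤ X*β*q^n := this
            _ = c*q^n := by rw [hcdef]
            _ ≤ C*q^n := mul_le_mul_of_nonneg_right h6 hqn0
        calc θ*X*q^(n+1)*β^2 = θ*(X*q^(n+1)*β)*β := by ring
          _ ≤ θ*(C*q^n)*β := by
              apply mul_le_mul_of_nonneg_right _ hβ0.le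
              exact mul_le_mul_of_nonneg_left h5 hθ0.le
      have h3 : β + θ*a*β^2 = θ*β := by linear_combination β * hθβ
      nlinarith [h2, h3]
    calc ‖g (n+1)‖ * β^(n+1) + θ * (‖sq (n+1)‖ * β^(n+2))
        ≤ (Gn + Sn) * β^(n+1)
            + θ * ((a*Sn + X*q^(n+1)*‖g (n+1)‖) * β^(n+2)) := by
          gcongr
      _ ≤ (Gn + Sn) * β^(n+1) + θ * ((a*Sn + X*q^(n+1)*(Gn+Sn)) * β^(n+2)) := by
          gcongr
      _ = Gn*β^n * (β + θ*X*q^(n+1)*β^2) + Sn*β^n * (β + θ*a*β^2 + θ*X*q^(n+1)*β^2) := by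
          ring
      _ ≤ Gn*β^n * (1 + C*q^n) + Sn*β^n * (θ*β*(1 + C*q^n)) := by
          gcongr <;> positivity
      _ = (1 + C*q^n) * (Gn * β^n + θ * (Sn * β^(n+1))) := by ring
  have hMbound := gronwall C q hC0 hq0.le hq1 M hM0 hMrec
  set Kb : ℝ := M 0 * Real.exp (C / (1-q)) with hKbdef
  have hKb0 : 0 ≤ Kb := mul_nonneg hM0 (Real.exp_nonneg _)
  have hgbound : ∀ n, ‖g n‖ ≤ Kb * ρ'^n := by
    intro n
    have h1 : ‖g n‖ * β^n ≤ M n := by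
      simp only [hMdef]
      have : 0 ≤ θ * (‖sq n‖ * β^(n+1)) := by positivity
      linarith
    have h2 : ‖g n‖ * β^n ≤ Kb := h1.trans (hMbound n)
    have h3 : (β * ρ')^n = 1 := by rw [hβρ, one_pow]
    calc ‖g n‖ = ‖g n‖ * β^n * ρ'^n := by
          rw [mul_assoc, ← mul_pow, h3, mul_one]
      _ ≤ Kb * ρ'^n := mul_le_mul_of_nonneg_right h2 (by positivity)
  -- ## the generating function S and its basic bound
  set S : ℂ → ℂ := fun u => ∑' n : ℕ, g n * (-u)^n with hSdef
  set cc : ℝ := τ * ρ' with hccdef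
  have hcc0 : 0 ≤ cc := mul_nonneg hτ0 hρ'0.le
  have hA : ∀ u : ℂ, ‖u‖ ≤ τ →
      Summable (fun n : ℕ => g n * (-u)^n) ∧ ‖S u‖ ≤ Kb / (1 - cc) := by
    intro u hu
    apply lemA _ Kb cc hKb0 hcc0 hτρ'
    intro n
    have h1 : ‖g n * (-u)^n‖ = ‖g n‖ * (‖u‖)^n := by
      rw [norm_mul, norm_pow, norm_neg]
    rw [h1]
    calc ‖g n‖ * (‖u‖)^n ≤ (Kb * ρ'^n) * τ^n := by
          apply mul_le_mul (hgbound n) (pow_le_pow_left₀ (norm_nonneg u) hu n)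
            (by positivity) (by positivity)
      _ = Kb * cc^n := by rw [hccdef, mul_pow]; ring
  -- ## functional equation
  have hB : ∀ u : ℂ, ‖u‖ ≤ τ →
      S u * ((1-u)*(1-(a:ℂ)*u)) = 1 - x*u*S ((q:ℂ)*u) := by
    intro u hu
    have hqu : ‖(q:ℂ)*u‖ ≤ τ := by
      rw [norm_mul, Complex.norm_real, Real.norm_eq_abs, abs_of_pos hq0]
      nlinarith [norm_nonneg u]
    have Su : Summable (fun n : ℕ => g n * (-u)^n) := (hA u hu).1
    have Squ : Summable (fun n : ℕ => g n * (-((q:ℂ)*u))^n) := (hA _ hqu).1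
    have Su1 : Summable (fun n : ℕ => g (n+1) * (-u)^(n+1)) := by
      exact_mod_cast (summable_nat_add_iff 1).mpr Su
    have Su2 : Summable (fun n : ℕ => g (n+2) * (-u)^(n+2)) := by
      exact_mod_cast (summable_nat_add_iff 2).mpr Su
    have Squ1 : Summable (fun n : ℕ => g (n+1) * (-((q:ℂ)*u))^(n+1)) := by
      exact_mod_cast (summable_nat_add_iff 1).mpr Squ
    have hSapp : ∀ v : ℂ, S v = ∑' n : ℕ, g n * (-v)^n := fun v => rfl
    have h0 : S u = 1 + ∑' n : ℕ, g (n+1) * (-u)^(n+1) := by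
      rw [hSapp, Summable.tsum_eq_zero_add Su, hg0]
      simp
    have h0q : S ((q:ℂ)*u) = 1 + ∑' n : ℕ, g (n+1) * (-((q:ℂ)*u))^(n+1) := by
      rw [hSapp, Summable.tsum_eq_zero_add Squ, hg0]
      simp
    have h1 : (∑' n : ℕ, g (n+1) * (-u)^(n+1))
        = g 1 * (-u) + ∑' n : ℕ, g (n+2) * (-u)^(n+2) := by
      rw [Summable.tsum_eq_zero_add Su1]
      norm_num
    have hterm : ∀ n : ℕ, g (n+2) * (-u)^(n+2)
        = -x*u*(g (n+1) * (-((q:ℂ)*u))^(n+1)) + ((a:ℂ)+1)*u*(g (n+1)*(-u)^(n+1))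
          - (a:ℂ)*u^2*(g n*(-u)^n) := by
      intro n
      have hqq : (-((q:ℂ)*u))^(n+1) = (q:ℂ)^(n+1) * (-u)^(n+1) := by
        rw [show (-((q:ℂ)*u)) = (q:ℂ) * (-u) by ring, mul_pow]
      rw [hgrec n, hqq]
      ring
    have h2 : (∑' n : ℕ, g (n+2) * (-u)^(n+2))
        = -x*u*(∑' n : ℕ, g (n+1) * (-((q:ℂ)*u))^(n+1))
          + ((a:ℂ)+1)*u*(∑' n : ℕ, g (n+1)*(-u)^(n+1))
          - (a:ℂ)*u^2*(S u) := by
      rw [hSapp, tsum_congr hterm]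
      rw [Summable.tsum_sub (((Squ1.mul_left _).add (Su1.mul_left _))) (Su.mul_left _),
        Summable.tsum_add (Squ1.mul_left _) (Su1.mul_left _), tsum_mul_left, tsum_mul_left,
        tsum_mul_left]
    have h3 : (∑' n : ℕ, g (n+1)*(-u)^(n+1)) = S u - 1 := by rw [h0]; ring
    have h3q : (∑' n : ℕ, g (n+1)*(-((q:ℂ)*u))^(n+1)) = S ((q:ℂ)*u) - 1 := by
      rw [h0q]; ring
    rw [h3, h3q] at h2
    rw [h2] at h1
    rw [h1, hg1] at h0
    linear_combination h0
  -- ## Pochhammer facts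
  have hPs : ∀ (z : ℂ) (k : ℕ), qPoch z (q:ℂ) (k+1) = qPoch z (q:ℂ) k * (1 - z*(q:ℂ)^k) := by
    intro z k
    rw [qPoch, qPoch, prod_range_succ]
  have hqj1 : ∀ j : ℕ, (q:ℝ)^j ≤ 1 := fun j => pow_le_one₀ hq0.le hq1.le
  have habs1 : ∀ j : ℕ, ‖t*(q:ℂ)^j‖ = τ * q^j := by
    intro j
    rw [norm_mul, norm_pow, Complex.norm_real, Real.norm_eq_abs, abs_of_pos hq0]
  have habs2 : ∀ j : ℕ, ‖(a:ℂ)*t*(q:ℂ)^j‖ = a * τ * q^j := by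
    intro j
    rw [norm_mul, norm_mul, norm_pow, Complex.norm_real, Real.norm_eq_abs, Complex.norm_real, Real.norm_eq_abs,
      abs_of_pos hq0, abs_of_pos ha]
  have hlow1 : ∀ j : ℕ, 1 - τ ≤ ‖1 - t*(q:ℂ)^j‖ := by
    intro j
    have h1 := norm_sub_norm_le (1:ℂ) (t*(q:ℂ)^j)
    simp only [norm_one] at h1
    rw [habs1 j] at h1
    nlinarith [hqj1 j, pow_nonneg hq0.le j]
  have hlow2 : ∀ j : ℕ, 1 - a*τ ≤ ‖1 - (a:ℂ)*t*(q:ℂ)^j‖ := by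
    intro j
    have h1 := norm_sub_norm_le (1:ℂ) ((a:ℂ)*t*(q:ℂ)^j)
    simp only [norm_one] at h1
    rw [habs2 j] at h1
    nlinarith [hqj1 j, pow_nonneg hq0.le j, mul_nonneg ha.le hτ0]
  have hne1 : ∀ j : ℕ, (1:ℂ) - t*(q:ℂ)^j ≠ 0 := by
    intro j h
    have := hlow1 j
    rw [h, norm_zero] at this
    linarith
  have hne2 : ∀ j : ℕ, (1:ℂ) - (a:ℂ)*t*(q:ℂ)^j ≠ 0 := by
    intro j h
    have := hlow2 j
    rw [h, norm_zero] at this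
    linarith
  have hP1ne : ∀ k, qPoch t (q:ℂ) k ≠ 0 := by
    intro k
    rw [qPoch]
    exact Finset.prod_ne_zero_iff.mpr (fun j _ => hne1 j)
  have hP2ne : ∀ k, qPoch ((a:ℂ)*t) (q:ℂ) k ≠ 0 := by
    intro k
    rw [qPoch]
    exact Finset.prod_ne_zero_iff.mpr (fun j _ => hne2 j)
  have hP1low : ∀ k, (1-τ)^k ≤ ‖qPoch t (q:ℂ) k‖ := by
    intro k
    rw [qPoch, norm_prod]
    calc (1-τ)^k = ∏ _j ∈ range k, (1-τ) := by rw [prod_const, card_range]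
      _ ≤ _ := Finset.prod_le_prod (fun j _ => hτ1'.le) (fun j _ => hlow1 j)
  have hP2low : ∀ k, (1-a*τ)^k ≤ ‖qPoch ((a:ℂ)*t) (q:ℂ) k‖ := by
    intro k
    rw [qPoch, norm_prod]
    calc (1-a*τ)^k = ∏ _j ∈ range k, (1-a*τ) := by rw [prod_const, card_range]
      _ ≤ _ := Finset.prod_le_prod (fun j _ => haτ1.le) (fun j _ => hlow2 j)
  -- ## the terms of the RHS and the remainder
  set R : ℕ → ℂ := fun k => (q:ℂ)^(e k) * (-x*t)^k /
      (qPoch t (q:ℂ) (k+1) * qPoch ((a:ℂ)*t) (q:ℂ) (k+1)) with hRdef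
  set cK : ℕ → ℂ := fun k => (q:ℂ)^(e k) * (-x*t)^k /
      (qPoch t (q:ℂ) k * qPoch ((a:ℂ)*t) (q:ℂ) k) with hcKdef
  have hqk : ∀ K : ℕ, ‖(q:ℂ)^K * t‖ ≤ τ := by
    intro K
    rw [norm_mul, norm_pow, Complex.norm_real, Real.norm_eq_abs, abs_of_pos hq0]
    nlinarith [hqj1 K, pow_nonneg hq0.le K]
  have hepow : ∀ K : ℕ, (q:ℂ)^(e (K+1)) = (q:ℂ)^(e K) * (q:ℂ)^K := by
    intro K
    rw [he1 K, pow_add]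
  -- ## the iteration identity
  have hCiter : ∀ K : ℕ, S t = (∑ k ∈ range K, R k) + cK K * S ((q:ℂ)^K * t) := by
    intro K
    induction K with
    | zero =>
      simp only [range_zero, sum_empty, hcKdef, pow_zero, one_mul, zero_add]
      have h1 : qPoch t (q:ℂ) 0 = 1 := by rw [qPoch, range_zero, prod_empty]
      have h2 : qPoch ((a:ℂ)*t) (q:ℂ) 0 = 1 := by rw [qPoch, range_zero, prod_empty]
      rw [h1, h2]
      norm_num
    | succ K ih =>
      have hfe := hB _ (hqk K)
      rw [show (q:ℂ) * ((q:ℂ)^K * t) = (q:ℂ)^(K+1)*t by ring] at hfe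
      have hd1 : (1:ℂ) - (q:ℂ)^K*t ≠ 0 := by
        rw [show (1:ℂ) - (q:ℂ)^K*t = 1 - t*(q:ℂ)^K by ring]
        exact hne1 K
      have hd2 : (1:ℂ) - (a:ℂ)*((q:ℂ)^K*t) ≠ 0 := by
        rw [show (1:ℂ) - (a:ℂ)*((q:ℂ)^K*t) = 1 - (a:ℂ)*t*(q:ℂ)^K by ring]
        exact hne2 K
      have hSu : S ((q:ℂ)^K*t) = (1 - x*((q:ℂ)^K*t)*S ((q:ℂ)^(K+1)*t)) /
          ((1-(q:ℂ)^K*t)*(1-(a:ℂ)*((q:ℂ)^K*t))) := by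
        rw [eq_div_iff (mul_ne_zero hd1 hd2)]
        linear_combination hfe
      have key : cK K * S ((q:ℂ)^K*t) = R K + cK (K+1) * S ((q:ℂ)^(K+1)*t) := by
        rw [hSu]
        simp only [hRdef, hcKdef]
        rw [hPs t K, hPs ((a:ℂ)*t) K, hepow K, pow_succ (-x*t) K]
        field_simp
        ring
      rw [ih, key, sum_range_succ]
      ring
  -- ## summability of the RHS
  have hfact : Filter.Tendsto (fun k : ℕ => X*τ*q^k / ((1-τ)*(1-a*τ))) Filter.atTop (nhds 0) := by
    have h1 : Filter.Tendsto (fun k : ℕ => (q:ℝ)^k) Filter.atTop (nhds 0) :=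
      tendsto_pow_atTop_nhds_zero_of_lt_one hq0.le hq1
    have h2 := (h1.const_mul (X*τ)).div_const ((1-τ)*(1-a*τ))
    simpa using h2
  have hRrel : ∀ k : ℕ, R (k+1) = R k * ((-x*t) * (q:ℂ)^k /
      ((1 - t*(q:ℂ)^(k+1))*(1 - (a:ℂ)*t*(q:ℂ)^(k+1)))) := by
    intro k
    simp only [hRdef]
    rw [hPs t (k+1), hPs ((a:ℂ)*t) (k+1), hepow k, pow_succ (-x*t) k]
    field_simp
  have hRsum : Summable R := by
    apply summable_of_ratio_norm_eventually_le (r := 1/2) (by norm_num)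
    filter_upwards [hfact.eventually (eventually_le_nhds (by norm_num : (0:ℝ) < 1/2))]
      with k hk
    rw [hRrel k, norm_mul]
    have hb : ‖(-x*t) * (q:ℂ)^k / ((1 - t*(q:ℂ)^(k+1))*(1 - (a:ℂ)*t*(q:ℂ)^(k+1)))‖
        ≤ X*τ*q^k / ((1-τ)*(1-a*τ)) := by
      have hnum : ‖(-x*t) * (q:ℂ)^k‖ = X*τ*q^k := by
        simp only [norm_mul, norm_pow, norm_neg,
          Complex.norm_real, Real.norm_eq_abs, abs_of_pos hq0]
        rfl
      rw [norm_div, hnum, norm_mul]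
      apply div_le_div_of_nonneg_left (by positivity) (by positivity)
      calc (1-τ)*(1-a*τ) ≤ ‖1 - t*(q:ℂ)^(k+1)‖ * (1-a*τ) := by
            apply mul_le_mul_of_nonneg_right (hlow1 (k+1)) haτ1.le
        _ ≤ _ := by
            apply mul_le_mul_of_nonneg_left (hlow2 (k+1)) (norm_nonneg _)
    calc ‖R k‖ * ‖(-x*t) * (q:ℂ)^k / ((1 - t*(q:ℂ)^(k+1))*(1 - (a:ℂ)*t*(q:ℂ)^(k+1)))‖
        ≤ ‖R k‖ * (X*τ*q^k / ((1-τ)*(1-a*τ))) := by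
          apply mul_le_mul_of_nonneg_left hb (norm_nonneg _)
      _ ≤ ‖R k‖ * (1/2) := by
          apply mul_le_mul_of_nonneg_left hk (norm_nonneg _)
      _ = 1/2 * ‖R k‖ := by ring
  -- ## the remainder tends to zero
  set w : ℝ := X*τ / ((1-τ)*(1-a*τ)) with hwdef
  have hw0 : 0 ≤ w := by positivity
  have hcKnorm : ∀ K : ℕ, ‖cK K‖ ≤ w^K * q^(e K) := by
    intro K
    simp only [hcKdef]
    have hnum : ‖(q:ℂ)^(e K) * (-x*t)^K‖ = q^(e K) * (X*τ)^K := by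
      simp only [norm_mul, norm_pow, norm_neg,
        Complex.norm_real, Real.norm_eq_abs, abs_of_pos hq0]
      rfl
    rw [norm_div, hnum, norm_mul]
    have hden : (1-τ)^K * (1-a*τ)^K ≤
        ‖qPoch t (q:ℂ) K‖ * ‖qPoch ((a:ℂ)*t) (q:ℂ) K‖ := by
      apply mul_le_mul (hP1low K) (hP2low K) (by positivity) (norm_nonneg _)
    calc q^(e K) * (X*τ)^K / (‖qPoch t (q:ℂ) K‖ * ‖qPoch ((a:ℂ)*t) (q:ℂ) K‖)
        ≤ q^(e K) * (X*τ)^K / ((1-τ)^K * (1-a*τ)^K) := by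
          apply div_le_div_of_nonneg_left (by positivity) (by positivity) hden
      _ = w^K * q^(e K) := by
          rw [hwdef, div_pow, mul_pow (1-τ)]
          ring
  have hrem : Filter.Tendsto (fun K : ℕ => cK K * S ((q:ℂ)^K * t)) Filter.atTop (nhds 0) := by
    rw [show (0:ℂ) = 0 by rfl]
    apply tendsto_zero_iff_norm_tendsto_zero.mpr
    apply squeeze_zero (fun K => norm_nonneg _) (g := fun K => (w^K * q^(e K)) * (Kb/(1-cc)))
    · intro K
      rw [norm_mul]
      apply mul_le_mul (hcKnorm K) ((hA _ (hqk K)).2) (norm_nonneg _) (by positivity)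
    · have h1 := (aux_tendsto w q hw0 hq0.le hq1).mul_const (Kb/(1-cc))
      simpa [hedef] using h1
  -- ## conclusion
  have hsum_tendsto : Filter.Tendsto (fun K : ℕ => ∑ k ∈ range K, R k)
      Filter.atTop (nhds (∑' k, R k)) := hRsum.hasSum.tendsto_sum_nat
  have hlim : Filter.Tendsto (fun K : ℕ => (∑ k ∈ range K, R k) + cK K * S ((q:ℂ)^K * t))
      Filter.atTop (nhds (∑' k, R k)) := by
    have := hsum_tendsto.add hrem
    simpa using this
  have hfin : S t = ∑' k, R k := by
    have hconst : (fun K : ℕ => (∑ k ∈ range K, R k) + cK K * S ((q:ℂ)^K * t))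
        = fun _ => S t := by
      funext K
      exact (hCiter K).symm
    rw [hconst] at hlim
    exact tendsto_nhds_unique tendsto_const_nhds hlim
  refine ⟨?_, ?_, ?_⟩
  · have h := (hA t le_rfl).1
    simp only [hgdef, hedef] at h
    exact h
  · have h := hRsum
    simp only [hRdef, hedef] at h
    exact h
  · have h1 : S t = ∑' n : ℕ, g n * (-t)^n := rfl
    have := hfin
    rw [h1] at this
    simp only [hgdef, hedef, hRdef] at this
    exact this
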